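/- arXiv:2507.21956 — 2 statements merged into one kernel-verified Lean document; each statement's English description precedes it below -/
import Mathlib

section
/- The detection threshold ζ* = min(σ̃²/ρ + ℵ, ρσ̃²) minimizes the detection error probability P_DEP(ζ) = 1 - (1/(2 ln ρ))·(ln(min(ζ, ρσ̃²)) - ln(max(ζ - ℵ, σ̃²/ρ))) over all ζ ∈ (σ̃²/ρ, ρσ̃²]. -/
open Real Set

/-- The detection threshold `ζ* = min(σn/ρ + ℵ, ρσn)` minimizes the detection error
probability `P_DEP(ζ) = 1 - (1/(2 ln ρ))(ln(min(ζ, ρσn)) - ln(max(ζ-ℵ, σn/ρ)))`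
over all `ζ ∈ (σn/ρ, ρσn]`. -/
theorem optimal_detection_threshold
    (ρ σn ℵ : ℝ) (hρ : 1 < ρ) (hσ : 0 < σn) (hℵ : 0 < ℵ) :
    ∀ ζ ∈ Set.Ioc (σn / ρ) (ρ * σn),
      1 - (1 / (2 * Real.log ρ)) *
          (Real.log (min (min (σn / ρ + ℵ) (ρ * σn)) (ρ * σn)) -
            Real.log (max (min (σn / ρ + ℵ) (ρ * σn) - ℵ) (σn / ρ)))
        ≤ 1 - (1 / (2 * Real.log ρ)) *
          (Real.log (min ζ (ρ * σn)) - Real.log (max (ζ - ℵ) (σn / ρ))) := by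
  intro ζ hζ
  obtain ⟨hζ1, hζ2⟩ := hζ
  set a := σn / ρ with ha_def
  set b := ρ * σn with hb_def
  have hρ0 : (0:ℝ) < ρ := by linarith
  have ha : 0 < a := div_pos hσ hρ0
  have hab : a < b := by
    have h1 : a < σn := by
      rw [ha_def, div_lt_iff₀ hρ0]; nlinarith
    have h2 : σn < b := by nlinarith
    linarith
  have hlogρ : 0 < Real.log ρ := Real.log_pos hρ
  set z := min (a + ℵ) b with hz_def
  have hz_le_b : z ≤ b := min_le_right _ _
  have hz_pos : 0 < z := lt_min (by linarith) (by linarith)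
  have hmin1 : min z b = z := min_eq_left hz_le_b
  have hmax1 : max (z - ℵ) a = a := by
    apply max_eq_right
    have : z ≤ a + ℵ := min_le_left _ _
    linarith
  rw [hmin1, hmax1]
  have hminζ : min ζ b = ζ := min_eq_left hζ2
  rw [hminζ]
  have key : Real.log ζ - Real.log (max (ζ - ℵ) a) ≤ Real.log z - Real.log a := by
    rcases le_or_gt ζ z with h | h
    · have h1 : Real.log ζ ≤ Real.log z := Real.log_le_log (by linarith) h
      have h2 : Real.log a ≤ Real.log (max (ζ - ℵ) a) :=
        Real.log_le_log ha (le_max_right _ _)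
      linarith
    · -- ζ > z, so z = a + ℵ and ζ - ℵ > a
      have hz_eq : z = a + ℵ := by
        rcases min_cases (a + ℵ) b with ⟨h1, _⟩ | ⟨h1, h2⟩
        · exact h1
        · exfalso; rw [hz_def, h1] at h; linarith
      have hζa : a < ζ - ℵ := by rw [hz_eq] at h; linarith
      have hmax2 : max (ζ - ℵ) a = ζ - ℵ := max_eq_left (le_of_lt hζa)
      rw [hmax2, hz_eq]
      have hζℵpos : 0 < ζ - ℵ := by linarith
      have hζpos : 0 < ζ := by linarith
      have hmul : ζ * a ≤ (a + ℵ) * (ζ - ℵ) := by nlinarith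
      have hlog : Real.log (ζ * a) ≤ Real.log ((a + ℵ) * (ζ - ℵ)) :=
        Real.log_le_log (by positivity) hmul
      rw [Real.log_mul (ne_of_gt hζpos) (ne_of_gt ha),
        Real.log_mul (by positivity) (ne_of_gt hζℵpos)] at hlog
      linarith
  have hc : (0:ℝ) ≤ 1 / (2 * Real.log ρ) := by positivity
  have := mul_le_mul_of_nonneg_left key hc
  linarith
end

section
/- If the leakage power satisfies ℵ < σ̃²(ρ - 1/ρ), then the minimum detection error probability equals P_DEP^min = 1 - (1/(2 ln ρ))·ln(1 + ρℵ/σ̃²), and this value is strictly positive; if ℵ ≥ σ̃²(ρ - 1/ρ), then substituting the optimal threshold ζ* = ρσ̃² yields P_DEP^min = 0. -/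
open Real Set

/-- Substituting the optimal threshold `ζ* = min(σn/ρ + ℵ, ρσn)` into the DEP:
if `ℵ < σn(ρ - 1/ρ)` then `P_DEP^min = 1 - (1/(2 ln ρ)) ln(1 + ρℵ/σn)`, which is
strictly positive; if `ℵ ≥ σn(ρ - 1/ρ)` then `P_DEP^min = 0`. -/
theorem minimum_DEP
    (ρ σn ℵ : ℝ) (hρ : 1 < ρ) (hσ : 0 < σn) (hℵ : 0 ≤ ℵ) :
    (ℵ < σn * (ρ - 1 / ρ) →
      (1 - (1 / (2 * Real.log ρ)) *
          (Real.log (min (min (σn / ρ + ℵ) (ρ * σn)) (ρ * σn)) -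
            Real.log (max (min (σn / ρ + ℵ) (ρ * σn) - ℵ) (σn / ρ)))
        = 1 - (1 / (2 * Real.log ρ)) * Real.log (1 + ρ * ℵ / σn)) ∧
      0 < 1 - (1 / (2 * Real.log ρ)) * Real.log (1 + ρ * ℵ / σn)) ∧
    (σn * (ρ - 1 / ρ) ≤ ℵ →
      1 - (1 / (2 * Real.log ρ)) *
          (Real.log (min (ρ * σn) (ρ * σn)) -
            Real.log (max (ρ * σn - ℵ) (σn / ρ))) = 0) := by
  have hρ0 : 0 < ρ := lt_trans one_pos hρ
  have hlog : 0 < Real.log ρ := Real.log_pos hρ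
  have hlogne : Real.log ρ ≠ 0 := ne_of_gt hlog
  constructor
  · intro h
    have hlt : σn / ρ + ℵ < ρ * σn := by
      have : σn / ρ + ℵ < σn / ρ + σn * (ρ - 1 / ρ) := by linarith
      calc σn / ρ + ℵ < σn / ρ + σn * (ρ - 1 / ρ) := this
        _ = ρ * σn := by field_simp; ring
    have hmin : min (σn / ρ + ℵ) (ρ * σn) = σn / ρ + ℵ := min_eq_left hlt.le
    rw [hmin, min_eq_left hlt.le]
    have hmax : max (σn / ρ + ℵ - ℵ) (σn / ρ) = σn / ρ := by
      simp
    rw [hmax]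
    have hσρ : 0 < σn / ρ := div_pos hσ hρ0
    have hfac : σn / ρ + ℵ = (σn / ρ) * (1 + ρ * ℵ / σn) := by
      field_simp
    have heq : Real.log (σn / ρ + ℵ) - Real.log (σn / ρ)
        = Real.log (1 + ρ * ℵ / σn) := by
      rw [hfac, Real.log_mul (ne_of_gt hσρ) ((by positivity : (0:ℝ) < 1 + ρ * ℵ / σn).ne')]
      ring
    constructor
    · rw [heq]
    · have h1 : (0:ℝ) ≤ ρ * ℵ / σn := by positivity
      have h2 : 1 + ρ * ℵ / σn < ρ ^ 2 := by
        have hd : ρ * ℵ / σn < ρ ^ 2 - 1 := by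
          rw [div_lt_iff₀ hσ]
          have h' : ρ * ℵ < ρ * (σn * (ρ - 1 / ρ)) := (mul_lt_mul_iff_right₀ hρ0).mpr h
          have : ρ * (σn * (ρ - 1 / ρ)) = (ρ ^ 2 - 1) * σn := by
            field_simp
          linarith [this ▸ h']
        linarith
      have hL : Real.log (1 + ρ * ℵ / σn) < 2 * Real.log ρ := by
        have := Real.log_lt_log (by linarith : (0:ℝ) < 1 + ρ * ℵ / σn) h2
        rwa [Real.log_pow, Nat.cast_ofNat] at this
      have : (1 / (2 * Real.log ρ)) * Real.log (1 + ρ * ℵ / σn) < 1 := by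
        rw [div_mul_eq_mul_div, one_mul, div_lt_one (by linarith)]
        exact hL
      linarith
  · intro h
    rw [min_self]
    have hle : ρ * σn - ℵ ≤ σn / ρ := by
      have : σn * (ρ - 1 / ρ) = ρ * σn - σn / ρ := by field_simp
      linarith [this ▸ h]
    rw [max_eq_right hle]
    have : Real.log (ρ * σn) - Real.log (σn / ρ) = 2 * Real.log ρ := by
      rw [Real.log_mul (ne_of_gt hρ0) (ne_of_gt hσ),
        Real.log_div (ne_of_gt hσ) (ne_of_gt hρ0)]
      ring
    rw [this]
    field_simp
    ring
end
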